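/- Let α be a circle of radius r and let S be a set of 6 circles, each orthogonal to α, each of radius at least r, pairwise non-nested. Then the circle α (as a point set) is contained in the union of the closed disks bounded by the circles in S. -/

import Mathlib

open Complex Real

noncomputable def SNC.toC (x : EuclideanSpace ℝ (Fin 2)) : ℂ := ⟨x 0, x 1⟩

noncomputable def SNC.pt (z : ℂ) : EuclideanSpace ℝ (Fin 2) :=
  (WithLp.equiv 2 (Fin 2 → ℝ)).symm ![z.re, z.im]

lemma SNC.toC_pt (z : ℂ) : SNC.toC (SNC.pt z) = z := by
  simp [SNC.toC, SNC.pt, Complex.ext_iff]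

lemma SNC.dist_toC (x y : EuclideanSpace ℝ (Fin 2)) :
    dist x y = dist (SNC.toC x) (SNC.toC y) := by
  rw [EuclideanSpace.dist_eq, Complex.dist_eq_re_im]
  simp [SNC.toC, Fin.sum_univ_two, Real.dist_eq, sq_abs]

/-- Two circles with `|ρp - ρq| < dist < ρp + ρq` meet. -/
lemma SNC.circles_meet (A B : EuclideanSpace ℝ (Fin 2)) (ρp ρq : ℝ)
    (hρp : 0 < ρp) (hρq : 0 < ρq)
    (h1 : ρq < ρp + dist A B) (h2 : ρp < ρq + dist A B) (h3 : dist A B < ρp + ρq) :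
    ∃ w, w ∈ Metric.sphere A ρp ∧ w ∈ Metric.sphere B ρq := by
  set D := dist A B with hD
  have hD0 : 0 < D := by linarith
  set t : ℝ := (D ^ 2 + ρp ^ 2 - ρq ^ 2) / (2 * D) with ht
  have ht2 : t ^ 2 ≤ ρp ^ 2 := by
    rw [ht, div_pow, div_le_iff₀ (by positivity)]
    nlinarith [mul_pos (mul_pos (show (0:ℝ) < ρp + ρq - D by linarith)
        (show (0:ℝ) < ρq + D - ρp by linarith))
      (mul_pos (show (0:ℝ) < D + ρp - ρq by linarith)
        (show (0:ℝ) < D + ρp + ρq by linarith))]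
  set h : ℝ := Real.sqrt (ρp ^ 2 - t ^ 2) with hh
  have hh2 : h ^ 2 = ρp ^ 2 - t ^ 2 := Real.sq_sqrt (by linarith)
  set E : ℂ := SNC.toC B - SNC.toC A with hE
  have habsE : ‖E‖ = D := by
    rw [hE, ← Complex.dist_eq, ← SNC.dist_toC, dist_comm]
  refine ⟨SNC.pt (SNC.toC A + (⟨t, h⟩ : ℂ) * E / D), ?_, ?_⟩
  · rw [Metric.mem_sphere, SNC.dist_toC, SNC.toC_pt, Complex.dist_eq]
    have he : SNC.toC A + (⟨t, h⟩ : ℂ) * E / ↑D - SNC.toC A = (⟨t, h⟩ : ℂ) * E / ↑D := by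
      ring
    rw [he, norm_div, norm_mul, Complex.norm_real, Real.norm_eq_abs, abs_of_pos hD0, habsE,
      mul_div_assoc, div_self hD0.ne', mul_one, Complex.norm_def, Complex.normSq_mk]
    rw [show t * t + h * h = ρp ^ 2 by nlinarith]
    exact Real.sqrt_sq hρp.le
  · rw [Metric.mem_sphere, SNC.dist_toC, SNC.toC_pt, Complex.dist_eq]
    have he : SNC.toC A + (⟨t, h⟩ : ℂ) * E / ↑D - SNC.toC B
        = (⟨t - D, h⟩ : ℂ) * E / ↑D := by
      have h1 : (⟨t - D, h⟩ : ℂ) = (⟨t, h⟩ : ℂ) - (D : ℂ) := by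
        simp [Complex.ext_iff]
      rw [h1, sub_mul, sub_div, hE]
      have h2 : (D : ℂ) ≠ 0 := by exact_mod_cast hD0.ne'
      field_simp
      ring
    rw [he, norm_div, norm_mul, Complex.norm_real, Real.norm_eq_abs, abs_of_pos hD0, habsE,
      mul_div_assoc, div_self hD0.ne', mul_one, Complex.norm_def, Complex.normSq_mk]
    have htD : (t - D) * (t - D) + h * h = ρq ^ 2 := by
      have : 2 * t * D = D ^ 2 + ρp ^ 2 - ρq ^ 2 := by
        rw [ht]; field_simp
      nlinarith
    rw [htD]
    exact Real.sqrt_sq hρq.le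

lemma SNC.floor_eq_abs_lt {a b : ℝ} (ha : 0 ≤ a) (hb : 0 ≤ b) (h : ⌊a⌋₊ = ⌊b⌋₊) :
    |a - b| < 1 := by
  have h1 := Nat.floor_le ha
  have h2 := Nat.floor_le hb
  have h3 := Nat.lt_floor_add_one a
  have h4 := Nat.lt_floor_add_one b
  rw [h] at h1 h3
  rw [abs_lt]; constructor <;> linarith

/-- Six angles in `(-π, π]` with pairwise `cos` of differences `≤ 1/2`:
one of them has `cos ≥ √2/2`. -/
lemma SNC.arcs {α : Type*} [DecidableEq α] (S : Finset α) (hcard : S.card = 6) (θ : α → ℝ)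
    (hrange : ∀ p ∈ S, -π < θ p ∧ θ p ≤ π)
    (hsep : ∀ p ∈ S, ∀ q ∈ S, p ≠ q → Real.cos (θ p - θ q) ≤ 1 / 2) :
    ∃ p ∈ S, Real.sqrt 2 / 2 ≤ Real.cos (θ p) := by
  by_contra hcon
  push_neg at hcon
  have pi_pos := Real.pi_pos
  set τ : α → ℝ := fun p => if θ p < 0 then θ p + 2 * π else θ p with hτ
  have habs : ∀ p ∈ S, π / 4 < θ p ∨ θ p < -(π / 4) := by
    intro p hp
    by_contra hc
    push_neg at hc
    have h1 : |θ p| ≤ π / 4 := abs_le.2 ⟨by linarith [hc.2], hc.1⟩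
    have h2 : Real.cos (π / 4) ≤ Real.cos |θ p| :=
      Real.cos_le_cos_of_nonneg_of_le_pi (abs_nonneg _) (by linarith) h1
    rw [Real.cos_abs, Real.cos_pi_div_four] at h2
    exact absurd (hcon p hp) (not_lt.2 h2)
  have hτrange : ∀ p ∈ S, π / 4 < τ p ∧ τ p < 7 * π / 4 := by
    intro p hp
    obtain ⟨h1, h2⟩ := hrange p hp
    rcases habs p hp with h | h
    · have : ¬ θ p < 0 := by linarith
      simp only [hτ, this, if_false]
      exact ⟨h, by linarith⟩
    · have : θ p < 0 := by linarith
      simp only [hτ, this, if_true]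
      constructor <;> linarith
  have hτcos : ∀ p ∈ S, ∀ q ∈ S, Real.cos (τ p - τ q) = Real.cos (θ p - θ q) := by
    intro p hp q hq
    simp only [hτ]
    split_ifs with h1 h2 h2
    · ring_nf
    · have : θ p + 2 * π - θ q = (θ p - θ q) + 2 * π := by ring
      rw [this, Real.cos_add_two_pi]
    · have : θ p - (θ q + 2 * π) = (θ p - θ q) - 2 * π := by ring
      rw [this, Real.cos_sub_two_pi]
    · rfl
  have hτsep : ∀ p ∈ S, ∀ q ∈ S, p ≠ q → π / 3 ≤ |τ p - τ q| := by
    intro p hp q hq hne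
    by_contra hc
    push_neg at hc
    have h1 : Real.cos (π / 3) < Real.cos |τ p - τ q| := by
      rcases eq_or_lt_of_le (abs_nonneg (τ p - τ q)) with h | h
      · rw [← h, Real.cos_zero, Real.cos_pi_div_three]; norm_num
      · exact Real.cos_lt_cos_of_nonneg_of_le_pi (abs_nonneg _) (by linarith) hc
    rw [Real.cos_abs, hτcos p hp q hq, Real.cos_pi_div_three] at h1
    exact absurd (hsep p hp q hq hne) (not_le.2 h1)
  have hmaps : ∀ p ∈ S, ⌊(τ p - π / 4) / (3 * π / 10)⌋₊ ∈ Finset.range 5 := by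
    intro p hp
    obtain ⟨h1, h2⟩ := hτrange p hp
    rw [Finset.mem_range, Nat.floor_lt (div_nonneg (by linarith) (by positivity))]
    rw [div_lt_iff₀ (by positivity)]
    push_cast
    linarith
  obtain ⟨p, hp, q, hq, hne, heq⟩ :=
    Finset.exists_ne_map_eq_of_card_lt_of_maps_to (by simp [hcard]) hmaps
  have h1 : |(τ p - π / 4) / (3 * π / 10) - (τ q - π / 4) / (3 * π / 10)| < 1 := by
    have hp1 := (hτrange p hp).1
    have hq1 := (hτrange q hq).1
    apply SNC.floor_eq_abs_lt _ _ heq <;>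
      · apply div_nonneg _ (by positivity)
        linarith
  have h2 : (τ p - π / 4) / (3 * π / 10) - (τ q - π / 4) / (3 * π / 10)
      = (τ p - τ q) / (3 * π / 10) := by ring
  rw [h2, abs_div, abs_of_pos (by positivity : (0:ℝ) < 3 * π / 10),
    div_lt_one (by positivity)] at h1
  have := hτsep p hp q hq hne
  linarith

/-- If such a set `S` has exactly 6 circles, each orthogonal to α, of radius at
least `r`, pairwise disjoint-or-orthogonal and non-nested, then the circle α is
contained in the union of the closed disks bounded by the circles in `S`. -/
theorem six_neighbours_cover
    (cα : EuclideanSpace ℝ (Fin 2)) (r : ℝ) (hr : 0 < r)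
    (S : Finset (EuclideanSpace ℝ (Fin 2) × ℝ))
    (hpos : ∀ p ∈ S, r ≤ p.2)
    (horth : ∀ p ∈ S, r ^ 2 + p.2 ^ 2 = dist cα p.1 ^ 2)
    (harr : ∀ p ∈ S, ∀ q ∈ S, p ≠ q →
      Disjoint (Metric.sphere p.1 p.2) (Metric.sphere q.1 q.2) ∨
      p.2 ^ 2 + q.2 ^ 2 = dist p.1 q.1 ^ 2)
    (hnonnested : ∀ p ∈ S, ∀ q ∈ S, p ≠ q →
      ¬ Metric.closedBall p.1 p.2 ⊆ Metric.closedBall q.1 q.2)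
    (hcard : S.card = 6) :
    Metric.sphere cα r ⊆ ⋃ p ∈ S, Metric.closedBall p.1 p.2 := by
  classical
  intro x hx
  rw [Metric.mem_sphere] at hx
  set z : ℂ := SNC.toC x - SNC.toC cα with hzdef
  have hzabs : ‖z‖ = r := by
    rw [hzdef, ← Complex.dist_eq, ← SNC.dist_toC, hx]
  have hzne : z ≠ 0 := by
    intro h; rw [h] at hzabs; simp at hzabs; linarith
  set zp : (EuclideanSpace ℝ (Fin 2) × ℝ) → ℂ :=
    fun p => SNC.toC p.1 - SNC.toC cα with hzp
  set dp : (EuclideanSpace ℝ (Fin 2) × ℝ) → ℝ := fun p => ‖zp p‖ with hdp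
  have hdp_eq : ∀ p, dp p = dist cα p.1 := by
    intro p
    rw [hdp]
    simp only [hzp]
    rw [← Complex.dist_eq, ← SNC.dist_toC, dist_comm]
  have hd2 : ∀ p ∈ S, dp p ^ 2 = r ^ 2 + p.2 ^ 2 := by
    intro p hp; rw [hdp_eq p, ← horth p hp]
  have hρ : ∀ p ∈ S, 0 < p.2 := fun p hp => lt_of_lt_of_le hr (hpos p hp)
  have hdge : ∀ p ∈ S, Real.sqrt 2 * r ≤ dp p := by
    intro p hp
    have h1 : dp p ^ 2 = r ^ 2 + p.2 ^ 2 := hd2 p hp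
    have h2 : 0 ≤ dp p := norm_nonneg _
    have h3 := hpos p hp
    nlinarith [Real.sq_sqrt (by norm_num : (2:ℝ) ≥ 0), Real.sqrt_nonneg 2]
  have hdpos : ∀ p ∈ S, 0 < dp p := by
    intro p hp
    have := hdge p hp
    nlinarith [Real.sqrt_nonneg 2, Real.sq_sqrt (by norm_num : (2:ℝ) ≥ 0)]
  have hzpne : ∀ p ∈ S, zp p ≠ 0 := by
    intro p hp h
    have := hdpos p hp
    rw [hdp] at this; simp only [h] at this; simp at this
  -- key inequality: for distinct p q, re (zp p * conj (zp q)) ≤ r ^ 2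
  have hre : ∀ p ∈ S, ∀ q ∈ S, p ≠ q → (zp p * (starRingEnd ℂ) (zp q)).re ≤ r ^ 2 := by
    intro p hp q hq hne
    have hD2 : dist p.1 q.1 ^ 2 =
        dp p ^ 2 + dp q ^ 2 - 2 * (zp p * (starRingEnd ℂ) (zp q)).re := by
      have h1 : dist p.1 q.1 = ‖zp p - zp q‖ := by
        rw [SNC.dist_toC, Complex.dist_eq]
        congr 1
        simp only [hzp]; ring
      rw [h1, Complex.sq_norm, Complex.normSq_sub, ← Complex.sq_norm (zp p),
        ← Complex.sq_norm (zp q)]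
    rcases harr p hp q hq hne with hdisj | horth2
    · -- disjoint spheres: dist ≥ sum of radii
      have hsum : p.2 + q.2 ≤ dist p.1 q.1 := by
        by_contra hlt
        push_neg at hlt
        have hn1 : ¬ (p.2 + dist p.1 q.1 ≤ q.2) := by
          intro hle
          exact hnonnested p hp q hq hne (Metric.closedBall_subset_closedBall' hle)
        have hn2 : ¬ (q.2 + dist q.1 p.1 ≤ p.2) := by
          intro hle
          exact hnonnested q hq p hp (Ne.symm hne) (Metric.closedBall_subset_closedBall' hle)
        rw [dist_comm] at hn2
        push_neg at hn1 hn2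
        obtain ⟨w, hw1, hw2⟩ := SNC.circles_meet p.1 q.1 p.2 q.2 (hρ p hp) (hρ q hq)
          (by linarith) (by linarith) hlt
        exact Set.disjoint_left.1 hdisj hw1 hw2
      have h1 := hd2 p hp
      have h2 := hd2 q hq
      have h3 := hρ p hp
      have h4 := hρ q hq
      nlinarith [dist_nonneg (x := p.1) (y := q.1)]
    · have h1 := hd2 p hp
      have h2 := hd2 q hq
      nlinarith
  -- angles
  set θ : (EuclideanSpace ℝ (Fin 2) × ℝ) → ℝ :=
    fun p => (zp p * (starRingEnd ℂ) z).arg with hθ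
  have hAne : ∀ p ∈ S, zp p * (starRingEnd ℂ) z ≠ 0 := by
    intro p hp
    exact mul_ne_zero (hzpne p hp) (by simpa using hzne)
  have habsA : ∀ p ∈ S, ‖zp p * (starRingEnd ℂ) z‖ = dp p * r := by
    intro p hp
    rw [norm_mul, Complex.norm_conj, hzabs, hdp]
  have hdpdq : ∀ p ∈ S, ∀ q ∈ S, 2 * r ^ 2 ≤ dp p * dp q := by
    intro p hp q hq
    have h1 := hdge p hp
    have h2 := hdge q hq
    have h0 : (0:ℝ) ≤ Real.sqrt 2 * r := by positivity
    have h3 := mul_le_mul h1 h2 h0 (le_trans h0 h1)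
    nlinarith [Real.mul_self_sqrt (by norm_num : (0:ℝ) ≤ 2)]
  have hcossub : ∀ p ∈ S, ∀ q ∈ S, p ≠ q → Real.cos (θ p - θ q) ≤ 1 / 2 := by
    intro p hp q hq hne
    have hBp := hAne p hp
    have hBq := hAne q hq
    rw [hθ]
    rw [Real.cos_sub, Complex.cos_arg hBp, Complex.cos_arg hBq,
      Complex.sin_arg, Complex.sin_arg, habsA p hp, habsA q hq]
    have hkey : (zp p * (starRingEnd ℂ) z).re * (zp q * (starRingEnd ℂ) z).re
        + (zp p * (starRingEnd ℂ) z).im * (zp q * (starRingEnd ℂ) z).im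
        = r ^ 2 * (zp p * (starRingEnd ℂ) (zp q)).re := by
      have h1 : r ^ 2 = Complex.normSq z := by rw [← Complex.sq_norm, hzabs]
      rw [h1]
      simp [Complex.mul_re, Complex.mul_im, Complex.normSq_apply]
      ring
    have hpq := hre p hp q hq hne
    have hprod := hdpdq p hp q hq
    have hdpp := hdpos p hp
    have hdqq := hdpos q hq
    rw [div_mul_div_comm, div_mul_div_comm, ← add_div]
    rw [div_le_iff₀ (by positivity)]
    rw [hkey]
    nlinarith
  have hrange : ∀ p ∈ S, -π < θ p ∧ θ p ≤ π := by
    intro p hp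
    exact ⟨Complex.neg_pi_lt_arg _, Complex.arg_le_pi _⟩
  obtain ⟨p, hp, hcosp⟩ := SNC.arcs S hcard θ hrange hcossub
  -- p's disk covers x
  have hreA : r ^ 2 ≤ (zp p * (starRingEnd ℂ) z).re := by
    have hcos' : Real.sqrt 2 / 2 ≤ (zp p * (starRingEnd ℂ) z).re / (dp p * r) := by
      rw [← habsA p hp, ← Complex.cos_arg (hAne p hp)]
      exact hcosp
    have hpos' : (0:ℝ) < dp p * r := mul_pos (hdpos p hp) hr
    have h2 := (le_div_iff₀ hpos').1 hcos'
    have h3 := hdge p hp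
    nlinarith [Real.mul_self_sqrt (by norm_num : (0:ℝ) ≤ 2), Real.sqrt_nonneg 2,
      mul_le_mul_of_nonneg_left h3 (show (0:ℝ) ≤ Real.sqrt 2 / 2 * r by positivity)]
  have hdist : dist x p.1 ≤ p.2 := by
    have h1 : dist x p.1 = ‖z - zp p‖ := by
      rw [SNC.dist_toC, Complex.dist_eq]
      congr 1
      simp only [hzdef, hzp]; ring
    have h2 : dist x p.1 ^ 2 = r ^ 2 + dp p ^ 2 - 2 * (z * (starRingEnd ℂ) (zp p)).re := by
      rw [h1, Complex.sq_norm, Complex.normSq_sub, ← Complex.sq_norm z, hzabs,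
        ← Complex.sq_norm (zp p)]
    have h3 : (z * (starRingEnd ℂ) (zp p)).re = (zp p * (starRingEnd ℂ) z).re := by
      simp [Complex.mul_re]
      ring
    have h4 := hd2 p hp
    have h5 := hρ p hp
    have h6 : dist x p.1 ^ 2 ≤ p.2 ^ 2 := by
      rw [h2, h3]
      linarith [hreA]
    nlinarith [dist_nonneg (x := x) (y := p.1)]
  exact Set.mem_iUnion₂.2 ⟨p, hp, Metric.mem_closedBall.2 hdist⟩
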